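/- Let n ≥ 2 be an integer and let 0 < H < (n-1)/n. Let t_H > 0 be defined by tanh(t_H) = nH/(n-1), and set d_H := cosh^{n-1}(t_H) − nH·J_{n-1}(t_H). Then R_{H,d_H}(t) > 0 and S_{H,d_H}(t) > 0 for all t > t_H, and for any fixed ρ₀ > t_H the function μ(ρ) := ∫_{ρ₀}^{ρ} T_{H,d_H}(t) dt is strictly increasing on (t_H, ∞), satisfies μ(ρ) → −∞ as ρ → t_H⁺ (the improper integral diverges at the double zero t_H of R_{H,d_H}), and μ(ρ) → +∞ as ρ → ∞. -/

import Mathlib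

open Filter Topology

/-- `Jfun m t = ∫₀ᵗ cosh^m(r) dr`. -/
noncomputable def Jfun (m : ℕ) (t : ℝ) : ℝ := ∫ r in (0:ℝ)..t, Real.cosh r ^ m

/-- `Rfun n H d t = cosh^{n-1}(t) − nH·J_{n-1}(t) − d`. -/
noncomputable def Rfun (n : ℕ) (H d t : ℝ) : ℝ :=
  Real.cosh t ^ (n - 1) - n * H * Jfun (n - 1) t - d

/-- `Sfun n H d t = cosh^{n-1}(t) + nH·J_{n-1}(t) + d`. -/
noncomputable def Sfun (n : ℕ) (H d t : ℝ) : ℝ :=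
  Real.cosh t ^ (n - 1) + n * H * Jfun (n - 1) t + d

/-- `Tfun n H d t = (nH·J_{n-1}(t) + d)/√(R·S)`. -/
noncomputable def Tfun (n : ℕ) (H d t : ℝ) : ℝ :=
  (n * H * Jfun (n - 1) t + d) / Real.sqrt (Rfun n H d t * Sfun n H d t)

lemma Jfun_hasDerivAt (m : ℕ) (t : ℝ) : HasDerivAt (Jfun m) (Real.cosh t ^ m) t :=
  ((Real.continuous_cosh.pow m).integral_hasStrictDerivAt 0 t).hasDerivAt

lemma Jfun_continuous (m : ℕ) : Continuous (Jfun m) :=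
  continuous_iff_continuousAt.2 fun t => (Jfun_hasDerivAt m t).continuousAt

lemma cast_sub_one (n : ℕ) (hn : 2 ≤ n) : ((n - 1 : ℕ) : ℝ) = (n : ℝ) - 1 := by
  have h1 : (1:ℕ) ≤ n := by omega
  push_cast [Nat.cast_sub h1]
  ring

lemma Rfun_hasDerivAt (n : ℕ) (hn : 2 ≤ n) (H d t : ℝ) :
    HasDerivAt (Rfun n H d)
      (Real.cosh t ^ (n - 2) * (((n : ℝ) - 1) * Real.sinh t - n * H * Real.cosh t)) t := by
  have h1 : HasDerivAt (fun s : ℝ => Real.cosh s ^ (n - 1))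
      (((n - 1 : ℕ) : ℝ) * Real.cosh t ^ (n - 1 - 1) * Real.sinh t) t :=
    (Real.hasDerivAt_cosh t).pow (n - 1)
  have h2 := (Jfun_hasDerivAt (n - 1) t).const_mul ((n : ℝ) * H)
  have h3 := (h1.sub h2).sub_const d
  refine h3.congr_deriv ?_
  have e1 : n - 1 - 1 = n - 2 := by omega
  rw [e1, cast_sub_one n hn]
  have e2 : Real.cosh t ^ (n - 1) = Real.cosh t ^ (n - 2) * Real.cosh t := by
    rw [← pow_succ]; congr 1; omega
  rw [e2]; ring

lemma Sfun_hasDerivAt (n : ℕ) (hn : 2 ≤ n) (H d t : ℝ) :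
    HasDerivAt (Sfun n H d)
      (Real.cosh t ^ (n - 2) * (((n : ℝ) - 1) * Real.sinh t + n * H * Real.cosh t)) t := by
  have h1 : HasDerivAt (fun s : ℝ => Real.cosh s ^ (n - 1))
      (((n - 1 : ℕ) : ℝ) * Real.cosh t ^ (n - 1 - 1) * Real.sinh t) t :=
    (Real.hasDerivAt_cosh t).pow (n - 1)
  have h2 := (Jfun_hasDerivAt (n - 1) t).const_mul ((n : ℝ) * H)
  have h3 := (h1.add h2).add_const d
  refine h3.congr_deriv ?_
  have e1 : n - 1 - 1 = n - 2 := by omega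
  rw [e1, cast_sub_one n hn]
  have e2 : Real.cosh t ^ (n - 1) = Real.cosh t ^ (n - 2) * Real.cosh t := by
    rw [← pow_succ]; congr 1; omega
  rw [e2]; ring

lemma Rfun_continuous (n : ℕ) (H d : ℝ) : Continuous (Rfun n H d) := by
  unfold Rfun
  exact ((Real.continuous_cosh.pow _).sub (continuous_const.mul (Jfun_continuous _))).sub continuous_const

lemma Sfun_continuous (n : ℕ) (H d : ℝ) : Continuous (Sfun n H d) := by
  unfold Sfun
  exact ((Real.continuous_cosh.pow _).add (continuous_const.mul (Jfun_continuous _))).add continuous_const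

set_option maxHeartbeats 1000000 in
/-- Let `n ≥ 2` and `0 < H < (n-1)/n`. Let `t_H > 0` satisfy `tanh(t_H) = nH/(n-1)` and set
`d_H := cosh^{n-1}(t_H) − nH·J_{n-1}(t_H)`. Then `R_{H,d_H} > 0` and `S_{H,d_H} > 0` on
`(t_H, ∞)`, and for any `ρ₀ > t_H` the function `μ(ρ) := ∫_{ρ₀}^{ρ} T_{H,d_H}(t) dt` is
strictly increasing on `(t_H, ∞)`, tends to `−∞` as `ρ → t_H⁺`, and tends to `+∞` as
`ρ → ∞`. -/
theorem stmt19 (n : ℕ) (hn : 2 ≤ n) (H : ℝ) (hH0 : 0 < H) (hH1 : H < ((n : ℝ) - 1) / n)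
    (tH : ℝ) (htH : 0 < tH) (htanh : Real.tanh tH = n * H / ((n : ℝ) - 1))
    (dH : ℝ) (hdH : dH = Real.cosh tH ^ (n - 1) - n * H * Jfun (n - 1) tH) :
    (∀ t, tH < t → 0 < Rfun n H dH t ∧ 0 < Sfun n H dH t) ∧
    ∀ ρ₀ : ℝ, tH < ρ₀ →
      StrictMonoOn (fun ρ : ℝ => ∫ t in ρ₀..ρ, Tfun n H dH t) (Set.Ioi tH) ∧
      Tendsto (fun ρ : ℝ => ∫ t in ρ₀..ρ, Tfun n H dH t) (𝓝[>] tH) atBot ∧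
      Tendsto (fun ρ : ℝ => ∫ t in ρ₀..ρ, Tfun n H dH t) atTop atTop := by
  -- basic numeric facts
  have hn0 : (0:ℝ) < n := by positivity
  have hn1 : (0:ℝ) < (n:ℝ) - 1 := by
    have : (2:ℝ) ≤ n := by exact_mod_cast hn
    linarith
  have hnH0 : 0 < (n:ℝ) * H := by positivity
  have hnH1 : (n:ℝ) * H < (n:ℝ) - 1 := by
    have := (lt_div_iff₀ hn0).mp hH1
    linarith [this]
  -- key identity from htanh
  have hkey : ((n:ℝ) - 1) * Real.sinh tH = (n:ℝ) * H * Real.cosh tH := by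
    have hc := Real.cosh_pos tH
    rw [Real.tanh_eq_sinh_div_cosh] at htanh
    field_simp at htanh
    linarith
  -- the function g and its properties
  set g : ℝ → ℝ := fun t => ((n:ℝ) - 1) * Real.sinh t - (n:ℝ) * H * Real.cosh t with hgdef
  have hg' : ∀ t, HasDerivAt g (((n:ℝ) - 1) * Real.cosh t - (n:ℝ) * H * Real.sinh t) t :=
    fun t => ((Real.hasDerivAt_sinh t).const_mul _).sub ((Real.hasDerivAt_cosh t).const_mul _)
  have hgmono : StrictMono g := by
    apply strictMono_of_deriv_pos
    intro t
    rw [(hg' t).deriv]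
    rcases le_or_gt (Real.sinh t) 0 with h | h
    · nlinarith [Real.cosh_pos t]
    · nlinarith [Real.sinh_lt_cosh t, Real.cosh_pos t]
  have hg0 : g tH = 0 := by simp only [hgdef]; linarith
  have hgpos : ∀ t, tH < t → 0 < g t := fun t ht => hg0 ▸ hgmono ht
  have hgnonneg : ∀ t, tH ≤ t → 0 ≤ g t := fun t ht => hg0 ▸ hgmono.monotone ht
  -- R
  have hR' : ∀ t, HasDerivAt (Rfun n H dH) (Real.cosh t ^ (n - 2) * g t) t :=
    fun t => Rfun_hasDerivAt n hn H dH t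
  have hRtH : Rfun n H dH tH = 0 := by unfold Rfun; rw [hdH]; ring
  have hRmono : StrictMonoOn (Rfun n H dH) (Set.Ici tH) := by
    apply strictMonoOn_of_deriv_pos (convex_Ici tH) (Rfun_continuous n H dH).continuousOn
    intro x hx
    rw [interior_Ici] at hx
    rw [(hR' x).deriv]
    have := hgpos x hx
    positivity
  have hRpos : ∀ t, tH < t → 0 < Rfun n H dH t := by
    intro t ht
    have := hRmono (Set.self_mem_Ici) (le_of_lt ht) ht
    rwa [hRtH] at this
  -- u
  set u : ℝ → ℝ := fun t => (n:ℝ) * H * Jfun (n - 1) t + dH with hudef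
  have hu' : ∀ t, HasDerivAt u ((n:ℝ) * H * Real.cosh t ^ (n - 1)) t :=
    fun t => ((Jfun_hasDerivAt (n - 1) t).const_mul _).add_const dH
  have humono : StrictMono u := by
    apply strictMono_of_deriv_pos
    intro t
    rw [(hu' t).deriv]
    positivity
  have hutH : u tH = Real.cosh tH ^ (n - 1) := by simp only [hudef]; rw [hdH]; ring
  have hupos : ∀ t, tH ≤ t → 0 < u t := by
    intro t ht
    have h1 : (0:ℝ) < Real.cosh tH ^ (n - 1) := by positivity
    calc (0:ℝ) < u tH := by rw [hutH]; exact h1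
    _ ≤ u t := humono.monotone ht
  have hSu : ∀ t, Sfun n H dH t = Real.cosh t ^ (n - 1) + u t := by
    intro t; unfold Sfun; simp only [hudef]; ring
  have hRu : ∀ t, Rfun n H dH t = Real.cosh t ^ (n - 1) - u t := by
    intro t; unfold Rfun; simp only [hudef]; ring
  have hSpos : ∀ t, tH < t → 0 < Sfun n H dH t := by
    intro t ht
    rw [hSu]
    have := hupos t (le_of_lt ht)
    positivity
  have hTu : ∀ t, Tfun n H dH t = u t / Real.sqrt (Rfun n H dH t * Sfun n H dH t) := by
    intro t; unfold Tfun; simp only [hudef]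
  -- continuity and integrability of T
  have hTcont : ContinuousOn (Tfun n H dH) (Set.Ioi tH) := by
    unfold Tfun
    apply ContinuousOn.div
    · exact ((continuous_const.mul (Jfun_continuous _)).add continuous_const).continuousOn
    · exact ((Rfun_continuous n H dH).mul (Sfun_continuous n H dH)).continuousOn.sqrt
    · intro t ht
      exact (Real.sqrt_pos.mpr (mul_pos (hRpos t ht) (hSpos t ht))).ne'
  have hTint : ∀ a b : ℝ, tH < a → tH < b →
      IntervalIntegrable (Tfun n H dH) MeasureTheory.volume a b := by
    intro a b ha hb
    apply (hTcont.mono ?_).intervalIntegrable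
    intro x hx
    exact lt_of_lt_of_le (lt_min ha hb) hx.1
  have hTpos : ∀ t, tH < t → 0 < Tfun n H dH t := by
    intro t ht
    rw [hTu]
    exact div_pos (hupos t (le_of_lt ht))
      (Real.sqrt_pos.mpr (mul_pos (hRpos t ht) (hSpos t ht)))
  refine ⟨fun t ht => ⟨hRpos t ht, hSpos t ht⟩, ?_⟩
  intro ρ₀ hρ₀
  refine ⟨?_, ?_, ?_⟩
  · -- strict monotonicity
    intro a ha b hb hab
    simp only [Set.mem_Ioi] at ha hb
    have key := intervalIntegral.integral_add_adjacent_intervals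
      (hTint ρ₀ a hρ₀ ha) (hTint a b ha hb)
    have pos := intervalIntegral.intervalIntegral_pos_of_pos_on (hTint a b ha hb)
      (fun x hx => hTpos x (lt_trans ha hx.1)) hab
    show (∫ t in ρ₀..a, Tfun n H dH t) < ∫ t in ρ₀..b, Tfun n H dH t
    linarith
  · -- tendsto atBot as ρ → tH⁺
    set L : ℝ := ((n:ℝ) - 1) * Real.cosh ρ₀ with hLdef
    have hL0 : 0 < L := by positivity
    set K1 : ℝ := Real.cosh ρ₀ ^ (n - 2) * L with hK1def
    have hK10 : 0 < K1 := by positivity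
    set K2 : ℝ := Sfun n H dH ρ₀ with hK2def
    have hK20 : 0 < K2 := hSpos ρ₀ hρ₀
    have hcoshle : ∀ s : ℝ, tH ≤ s → s ≤ ρ₀ → Real.cosh s ≤ Real.cosh ρ₀ := by
      intro s h1 h2
      apply Real.cosh_le_cosh.mpr
      rw [abs_of_pos (lt_of_lt_of_le htH h1), abs_of_pos (lt_trans htH hρ₀)]
      exact h2
    -- g s ≤ L (s - tH) on [tH, ρ₀]
    have hgle : ∀ s ∈ Set.Icc tH ρ₀, g s ≤ L * (s - tH) := by
      set φ : ℝ → ℝ := fun s => L * (s - tH) - g s with hφdef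
      have hφ' : ∀ s, HasDerivAt φ (L - (((n:ℝ) - 1) * Real.cosh s - (n:ℝ) * H * Real.sinh s)) s := by
        intro s
        have h := ((((hasDerivAt_id s).sub_const tH).const_mul L)).sub (hg' s)
        exact h.congr_deriv (by ring)
      have hφmono : MonotoneOn φ (Set.Icc tH ρ₀) := by
        apply monotoneOn_of_deriv_nonneg (convex_Icc tH ρ₀)
          (Continuous.continuousOn (by
            have : Continuous φ := by
              apply Continuous.sub
              · exact continuous_const.mul (continuous_id.sub continuous_const)
              · exact (continuous_const.mul Real.continuous_sinh).sub
                  (continuous_const.mul Real.continuous_cosh)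
            exact this))
        · intro x hx
          exact (hφ' x).differentiableAt.differentiableWithinAt
        · intro x hx
          rw [interior_Icc] at hx
          rw [(hφ' x).deriv]
          have h1 : Real.cosh x ≤ Real.cosh ρ₀ := hcoshle x (le_of_lt hx.1) (le_of_lt hx.2)
          have h2 : 0 < Real.sinh x := Real.sinh_pos_iff.mpr (lt_trans htH hx.1)
          have h3 : ((n:ℝ) - 1) * Real.cosh x ≤ L := by
            rw [hLdef]; nlinarith
          nlinarith
      intro s hs
      have h0 : φ tH ≤ φ s := hφmono (Set.left_mem_Icc.mpr (le_of_lt hρ₀)) hs hs.1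
      have hφtH : φ tH = 0 := by simp only [hφdef]; rw [hg0]; ring
      rw [hφtH] at h0
      simp only [hφdef] at h0
      linarith
    -- R t ≤ K1 * (t - tH)^2 on [tH, ρ₀]
    have hRle : ∀ t ∈ Set.Icc tH ρ₀, Rfun n H dH t ≤ K1 * (t - tH) ^ 2 := by
      set ψ : ℝ → ℝ := fun t => K1 * (t - tH) ^ 2 - Rfun n H dH t with hψdef
      have hψ' : ∀ s, HasDerivAt ψ
          (K1 * (2 * (s - tH)) - Real.cosh s ^ (n - 2) * g s) s := by
        intro s
        have h1 : HasDerivAt (fun t : ℝ => (t - tH) ^ 2) (2 * (s - tH) ^ 1 * 1) s := by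
          exact HasDerivAt.pow ((hasDerivAt_id s).sub_const tH) 2 |>.congr_deriv (by norm_num)
        have h2 := (h1.const_mul K1).sub (hR' s)
        refine h2.congr_deriv ?_
        ring
      have hψmono : MonotoneOn ψ (Set.Icc tH ρ₀) := by
        apply monotoneOn_of_deriv_nonneg (convex_Icc tH ρ₀)
        · exact Continuous.continuousOn (by
            exact (continuous_const.mul ((continuous_id.sub continuous_const).pow 2)).sub
              (Rfun_continuous n H dH))
        · intro x hx
          exact (hψ' x).differentiableAt.differentiableWithinAt
        · intro x hx
          rw [interior_Icc] at hx
          rw [(hψ' x).deriv]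
          have h1 : g x ≤ L * (x - tH) := hgle x ⟨le_of_lt hx.1, le_of_lt hx.2⟩
          have h2 : 0 ≤ g x := hgnonneg x (le_of_lt hx.1)
          have h3 : Real.cosh x ^ (n - 2) ≤ Real.cosh ρ₀ ^ (n - 2) :=
            pow_le_pow_left₀ (le_of_lt (Real.cosh_pos x))
              (hcoshle x (le_of_lt hx.1) (le_of_lt hx.2)) _
          have h4 : Real.cosh x ^ (n - 2) * g x ≤ Real.cosh ρ₀ ^ (n - 2) * (L * (x - tH)) := by
            apply mul_le_mul h3 h1 h2 (by positivity)
          have h5 : (0:ℝ) ≤ K1 * (x - tH) := by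
            apply mul_nonneg (le_of_lt hK10); linarith [hx.1]
          rw [hK1def] at h5 ⊢
          nlinarith
      intro t ht
      have h0 : ψ tH ≤ ψ t := hψmono (Set.left_mem_Icc.mpr (le_of_lt hρ₀)) ht ht.1
      have hψtH : ψ tH = 0 := by simp only [hψdef]; rw [hRtH]; ring
      rw [hψtH] at h0
      simp only [hψdef] at h0
      linarith
    -- S t ≤ K2 on [tH, ρ₀]
    have hSle : ∀ t ∈ Set.Icc tH ρ₀, Sfun n H dH t ≤ K2 := by
      intro t ht
      rw [hK2def, hSu, hSu]
      have h1 : Real.cosh t ^ (n - 1) ≤ Real.cosh ρ₀ ^ (n - 1) :=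
        pow_le_pow_left₀ (le_of_lt (Real.cosh_pos t)) (hcoshle t ht.1 ht.2) _
      have h2 : u t ≤ u ρ₀ := humono.monotone ht.2
      linarith
    -- lower bound for T
    set A : ℝ := Real.cosh tH ^ (n - 1) with hAdef
    have hA0 : 0 < A := by positivity
    set c₀ : ℝ := A / Real.sqrt (K1 * K2) with hc₀def
    have hsqK : 0 < Real.sqrt (K1 * K2) := Real.sqrt_pos.mpr (mul_pos hK10 hK20)
    have hc₀ : 0 < c₀ := div_pos hA0 hsqK
    have hTlower : ∀ t, tH < t → t ≤ ρ₀ → c₀ * (t - tH)⁻¹ ≤ Tfun n H dH t := by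
      intro t ht1 ht2
      have httH : 0 < t - tH := by linarith
      have hRSpos : 0 < Rfun n H dH t * Sfun n H dH t :=
        mul_pos (hRpos t ht1) (hSpos t ht1)
      have hsq1 : 0 < Real.sqrt (Rfun n H dH t * Sfun n H dH t) := Real.sqrt_pos.mpr hRSpos
      have hsq2 : Real.sqrt (Rfun n H dH t * Sfun n H dH t) ≤ Real.sqrt (K1 * K2) * (t - tH) := by
        have h1 : Rfun n H dH t * Sfun n H dH t ≤ K1 * (t - tH) ^ 2 * K2 := by
          apply mul_le_mul (hRle t ⟨le_of_lt ht1, ht2⟩) (hSle t ⟨le_of_lt ht1, ht2⟩)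
            (le_of_lt (hSpos t ht1)) (by positivity)
        calc Real.sqrt (Rfun n H dH t * Sfun n H dH t)
            ≤ Real.sqrt (K1 * (t - tH) ^ 2 * K2) := Real.sqrt_le_sqrt h1
          _ = Real.sqrt (K1 * K2) * (t - tH) := by
              rw [show K1 * (t - tH) ^ 2 * K2 = (K1 * K2) * (t - tH) ^ 2 by ring,
                Real.sqrt_mul (by positivity), Real.sqrt_sq (le_of_lt httH)]
      have hAu : A ≤ u t := by
        rw [← hutH]
        exact humono.monotone (le_of_lt ht1)
      rw [hTu]
      calc c₀ * (t - tH)⁻¹ = A / (Real.sqrt (K1 * K2) * (t - tH)) := by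
            rw [hc₀def]; field_simp
        _ ≤ A / Real.sqrt (Rfun n H dH t * Sfun n H dH t) := by gcongr
        _ ≤ u t / Real.sqrt (Rfun n H dH t * Sfun n H dH t) := by gcongr
    -- log integral
    have hloweint : ∀ ρ : ℝ, tH < ρ →
        IntervalIntegrable (fun t => c₀ * (t - tH)⁻¹) MeasureTheory.volume ρ ρ₀ := by
      intro ρ hρ
      apply ContinuousOn.intervalIntegrable
      apply ContinuousOn.mul continuousOn_const
      apply ContinuousOn.inv₀ ((continuous_id.sub continuous_const).continuousOn)
      intro x hx
      have : tH < x := lt_of_lt_of_le (lt_min hρ hρ₀) hx.1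
      show x - tH ≠ 0
      intro hc
      have : x = tH := by linarith [sub_eq_zero.mp hc]
      linarith
    have hlog : ∀ ρ : ℝ, tH < ρ →
        (∫ t in ρ..ρ₀, (t - tH)⁻¹) = Real.log (ρ₀ - tH) - Real.log (ρ - tH) := by
      intro ρ hρ
      have h1 : (∫ t in ρ..ρ₀, (t - tH)⁻¹) = ∫ x in ρ - tH..ρ₀ - tH, x⁻¹ :=
        intervalIntegral.integral_comp_sub_right (fun x => x⁻¹) tH
      rw [h1, integral_inv (Set.notMem_uIcc_of_lt (by linarith) (by linarith)),
        Real.log_div (by linarith) (by linarith)]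
    have hbound : ∀ ρ ∈ Set.Ioo tH ρ₀,
        (∫ t in ρ₀..ρ, Tfun n H dH t) ≤ c₀ * Real.log (ρ - tH) - c₀ * Real.log (ρ₀ - tH) := by
      intro ρ hρ
      have hsymm : (∫ t in ρ₀..ρ, Tfun n H dH t) = -∫ t in ρ..ρ₀, Tfun n H dH t :=
        intervalIntegral.integral_symm ρ ρ₀
      have hm : (∫ t in ρ..ρ₀, c₀ * (t - tH)⁻¹) ≤ ∫ t in ρ..ρ₀, Tfun n H dH t :=
        intervalIntegral.integral_mono_on (le_of_lt hρ.2) (hloweint ρ hρ.1)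
          (hTint ρ ρ₀ hρ.1 hρ₀)
          (fun x hx => hTlower x (lt_of_lt_of_le hρ.1 hx.1) hx.2)
      have hce : (∫ t in ρ..ρ₀, c₀ * (t - tH)⁻¹)
          = c₀ * (Real.log (ρ₀ - tH) - Real.log (ρ - tH)) := by
        rw [intervalIntegral.integral_const_mul, hlog ρ hρ.1]
      rw [hsymm]
      rw [hce] at hm
      nlinarith
    have h1 : Tendsto (fun ρ : ℝ => ρ - tH) (𝓝[>] tH) (𝓝[>] (0:ℝ)) := by
      apply tendsto_nhdsWithin_of_tendsto_nhds_of_eventually_within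
      · have h : Tendsto (fun ρ : ℝ => ρ - tH) (𝓝 tH) (𝓝 (tH - tH)) :=
          (continuous_id.sub continuous_const).tendsto tH
        rw [sub_self] at h
        exact h.mono_left nhdsWithin_le_nhds
      · filter_upwards [self_mem_nhdsWithin] with x hx
        simp only [Set.mem_Ioi] at *
        linarith
    have h2 : Tendsto (fun ρ : ℝ => Real.log (ρ - tH)) (𝓝[>] tH) atBot :=
      Real.tendsto_log_nhdsGT_zero.comp h1
    have h3 : Tendsto (fun ρ : ℝ => c₀ * Real.log (ρ - tH) - c₀ * Real.log (ρ₀ - tH))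
        (𝓝[>] tH) atBot := by
      simp only [sub_eq_add_neg]
      exact tendsto_atBot_add_const_right _ _ (h2.const_mul_atBot hc₀)
    apply tendsto_atBot_mono' _ _ h3
    filter_upwards [Ioo_mem_nhdsGT hρ₀] with ρ hρ using hbound ρ hρ
  · -- tendsto atTop
    set ε : ℝ := (n:ℝ) * H / (2 * Real.exp 1) ^ (n - 1) with hεdef
    have h2e : (0:ℝ) < 2 * Real.exp 1 := by positivity
    have hε : 0 < ε := by positivity
    have hJge : ∀ t : ℝ, 1 ≤ t → (Real.cosh t / (2 * Real.exp 1)) ^ (n - 1) ≤ Jfun (n - 1) t := by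
      intro t ht
      have hint : ∀ a b : ℝ, IntervalIntegrable (fun r => Real.cosh r ^ (n - 1))
          MeasureTheory.volume a b := fun a b => (Real.continuous_cosh.pow _).intervalIntegrable a b
      have hsplit : Jfun (n - 1) t
          = (∫ r in (0:ℝ)..(t - 1), Real.cosh r ^ (n - 1))
            + ∫ r in (t - 1)..t, Real.cosh r ^ (n - 1) :=
        (intervalIntegral.integral_add_adjacent_intervals (hint 0 (t-1)) (hint (t-1) t)).symm
      have hp1 : 0 ≤ ∫ r in (0:ℝ)..(t - 1), Real.cosh r ^ (n - 1) :=
        intervalIntegral.integral_nonneg (by linarith) (fun x _ => by positivity)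
      have hp2 : Real.cosh (t - 1) ^ (n - 1) ≤ ∫ r in (t - 1)..t, Real.cosh r ^ (n - 1) := by
        have hc : (∫ _ in (t - 1)..t, Real.cosh (t-1) ^ (n - 1))
            = Real.cosh (t-1) ^ (n - 1) := by
          rw [intervalIntegral.integral_const]
          simp
        rw [← hc]
        apply intervalIntegral.integral_mono_on (by linarith)
          intervalIntegrable_const (hint _ _)
        intro x hx
        apply pow_le_pow_left₀ (le_of_lt (Real.cosh_pos _))
        apply Real.cosh_le_cosh.mpr
        rw [abs_of_nonneg (by linarith [hx.1] : (0:ℝ) ≤ t - 1),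
          abs_of_nonneg (by linarith [hx.1] : (0:ℝ) ≤ x)]
        exact hx.1
      have hc1 : Real.cosh t / (2 * Real.exp 1) ≤ Real.cosh (t - 1) := by
        have he1 : Real.cosh t ≤ Real.exp t := by
          rw [Real.cosh_eq]
          have : Real.exp (-t) ≤ Real.exp t := Real.exp_le_exp.mpr (by linarith)
          linarith
        have he2 : Real.exp (t - 1) / 2 ≤ Real.cosh (t - 1) := by
          rw [Real.cosh_eq]
          have := Real.exp_pos (-(t - 1))
          linarith
        have he3 : Real.exp t / (2 * Real.exp 1) = Real.exp (t - 1) / 2 := by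
          rw [Real.exp_sub]
          field_simp
        calc Real.cosh t / (2 * Real.exp 1) ≤ Real.exp t / (2 * Real.exp 1) := by gcongr
          _ = Real.exp (t - 1) / 2 := he3
          _ ≤ Real.cosh (t - 1) := he2
      have hpow : (Real.cosh t / (2 * Real.exp 1)) ^ (n - 1) ≤ Real.cosh (t - 1) ^ (n - 1) :=
        pow_le_pow_left₀ (by positivity) hc1 _
      rw [hsplit]
      linarith
    have hulow : ∀ t : ℝ, 1 ≤ t → ε * Real.cosh t ^ (n - 1) + dH ≤ u t := by
      intro t ht
      have h1 := hJge t ht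
      have h2 : (n:ℝ) * H * (Real.cosh t / (2 * Real.exp 1)) ^ (n - 1)
          ≤ (n:ℝ) * H * Jfun (n - 1) t :=
        mul_le_mul_of_nonneg_left h1 (le_of_lt hnH0)
      have h3 : ε * Real.cosh t ^ (n - 1)
          = (n:ℝ) * H * (Real.cosh t / (2 * Real.exp 1)) ^ (n - 1) := by
        rw [hεdef, div_pow]
        ring
      simp only [hudef]
      rw [h3]
      linarith
    have hct : Tendsto (fun t : ℝ => Real.cosh t ^ (n - 1)) atTop atTop := by
      apply tendsto_atTop_mono _ (Real.tendsto_exp_atTop.atTop_div_const two_pos)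
      intro t
      have h1 : Real.exp t / 2 ≤ Real.cosh t := by
        rw [Real.cosh_eq]; linarith [Real.exp_pos (-t)]
      have h2 : Real.cosh t ≤ Real.cosh t ^ (n - 1) :=
        le_self_pow₀ (Real.one_le_cosh t) (by omega)
      linarith
    obtain ⟨t₀, ht₀⟩ := Filter.eventually_atTop.mp (hct.eventually_ge_atTop (2 * |dH| / ε))
    set t₁ : ℝ := max (max 1 t₀) (max ρ₀ (tH + 1)) with ht₁def
    have ht₁1 : (1:ℝ) ≤ t₁ := le_max_of_le_left (le_max_left _ _)
    have ht₁0 : t₀ ≤ t₁ := le_max_of_le_left (le_max_right _ _)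
    have ht₁ρ : ρ₀ ≤ t₁ := le_max_of_le_right (le_max_left _ _)
    have ht₁H : tH < t₁ :=
      lt_of_lt_of_le (by linarith) (le_max_of_le_right (le_max_right _ _))
    have hTc : ∀ t : ℝ, t₁ ≤ t → ε / 2 ≤ Tfun n H dH t := by
      intro t ht
      have h1t : (1:ℝ) ≤ t := le_trans ht₁1 ht
      have htt : tH < t := lt_of_lt_of_le ht₁H ht
      have hC : (0:ℝ) < Real.cosh t ^ (n - 1) := by positivity
      have hdb : 2 * |dH| / ε ≤ Real.cosh t ^ (n - 1) := ht₀ t (le_trans ht₁0 ht)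
      have hu2 : ε / 2 * Real.cosh t ^ (n - 1) ≤ u t := by
        have h5 : ε / 2 * (2 * |dH| / ε) = |dH| := by
          field_simp
        have h6 : ε / 2 * (2 * |dH| / ε) ≤ ε / 2 * Real.cosh t ^ (n - 1) :=
          mul_le_mul_of_nonneg_left hdb (by positivity)
        have h7 := hulow t h1t
        rw [h5] at h6
        have h11 : 0 ≤ ε / 2 * Real.cosh t ^ (n - 1) + dH := by
          have := neg_abs_le dH
          linarith
        calc ε / 2 * Real.cosh t ^ (n - 1)
            ≤ ε / 2 * Real.cosh t ^ (n - 1) + (ε / 2 * Real.cosh t ^ (n - 1) + dH) :=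
              le_add_of_nonneg_right h11
          _ = ε * Real.cosh t ^ (n - 1) + dH := by ring
          _ ≤ u t := h7
      have hRSpos : 0 < Rfun n H dH t * Sfun n H dH t := mul_pos (hRpos t htt) (hSpos t htt)
      have hspos : 0 < Real.sqrt (Rfun n H dH t * Sfun n H dH t) := Real.sqrt_pos.mpr hRSpos
      have hsq : Real.sqrt (Rfun n H dH t * Sfun n H dH t) ≤ Real.cosh t ^ (n - 1) := by
        have h8 : Rfun n H dH t * Sfun n H dH t ≤ (Real.cosh t ^ (n - 1)) ^ 2 := by
          rw [hRu, hSu]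
          nlinarith [sq_nonneg (u t)]
        calc Real.sqrt (Rfun n H dH t * Sfun n H dH t)
            ≤ Real.sqrt ((Real.cosh t ^ (n - 1)) ^ 2) := Real.sqrt_le_sqrt h8
          _ = Real.cosh t ^ (n - 1) := Real.sqrt_sq (le_of_lt hC)
      have hu0 : 0 ≤ u t := le_of_lt (hupos t (le_of_lt htt))
      rw [hTu]
      calc ε / 2 = ε / 2 * Real.cosh t ^ (n - 1) / Real.cosh t ^ (n - 1) := by
            field_simp
        _ ≤ u t / Real.cosh t ^ (n - 1) := by gcongr
        _ ≤ u t / Real.sqrt (Rfun n H dH t * Sfun n H dH t) := by gcongr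
    have hlin : ∀ ρ : ℝ, t₁ ≤ ρ →
        (∫ t in ρ₀..t₁, Tfun n H dH t) + ε / 2 * (ρ - t₁) ≤ ∫ t in ρ₀..ρ, Tfun n H dH t := by
      intro ρ hρ
      have htHρ : tH < ρ := lt_of_lt_of_le ht₁H hρ
      have hadd := intervalIntegral.integral_add_adjacent_intervals
        (hTint ρ₀ t₁ hρ₀ ht₁H) (hTint t₁ ρ ht₁H htHρ)
      have hmono : (∫ _ in t₁..ρ, (ε / 2 : ℝ)) ≤ ∫ t in t₁..ρ, Tfun n H dH t :=
        intervalIntegral.integral_mono_on hρ intervalIntegrable_const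
          (hTint t₁ ρ ht₁H htHρ) (fun x hx => hTc x hx.1)
      rw [intervalIntegral.integral_const, smul_eq_mul] at hmono
      nlinarith
    have hbt : Tendsto (fun ρ : ℝ => (∫ t in ρ₀..t₁, Tfun n H dH t) + ε / 2 * (ρ - t₁))
        atTop atTop := by
      apply tendsto_atTop_add_const_left
      have h9 : Tendsto (fun ρ : ℝ => ρ + -t₁) atTop atTop :=
        tendsto_atTop_add_const_right _ _ tendsto_id
      have h10 : Tendsto (fun ρ : ℝ => ε / 2 * (ρ - t₁)) atTop atTop := by
        simp only [sub_eq_add_neg]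
        exact Tendsto.const_mul_atTop (by positivity) h9
      exact h10
    apply tendsto_atTop_mono' atTop _ hbt
    filter_upwards [eventually_ge_atTop t₁] with ρ hρ using hlin ρ hρ
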